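/- Let q be a prime power with q ≡ 3 (mod 4), and write q = 2^A·m − 1 with m odd and A ≥ 2 (so 2^A exactly divides q+1). If 2 ≤ n < A, then over F_q the polynomial x^{2^n} + 1 factors as the product of 2^{n−1} irreducible quadratic trinomials: x^{2^n} + 1 = ∏_{γ ∈ Γ} (x² + γ x + 1), where Γ ⊆ F_q is the set of roots in F_q of the Dickson polynomial D_{2^{n−1}}(x, 1), each factor x² + γx + 1 is irreducible over F_q, and |Γ| = 2^{n−1}. -/

import Mathlib

open Polynomial

private lemma dickson_deg_aux {R : Type*} [CommRing R] [Nontrivial R] (k : ℕ) (a : R) :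
    ∀ j : ℕ, (Polynomial.dickson k a (j + 1)).Monic ∧
      (Polynomial.dickson k a (j + 1)).natDegree = j + 1 ∧
      (Polynomial.dickson k a j).natDegree ≤ j
  | 0 => by
      refine ⟨by simp [monic_X], by simp, ?_⟩
      simp only [dickson_zero]
      exact le_trans (natDegree_sub_le _ _) (by simp)
  | (j + 1) => by
      obtain ⟨hm, hd, hle⟩ := dickson_deg_aux k a j
      have hmulm : (X * Polynomial.dickson k a (j + 1)).Monic := monic_X.mul hm
      have hmul : (X * Polynomial.dickson k a (j + 1)).natDegree = j + 2 := by
        rw [monic_X.natDegree_mul hm, natDegree_X, hd]; omega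
      have hq : (C a * Polynomial.dickson k a j).natDegree < j + 2 := by
        calc (C a * Polynomial.dickson k a j).natDegree
            ≤ (C a).natDegree + (Polynomial.dickson k a j).natDegree := natDegree_mul_le
          _ ≤ 0 + j := by simpa [natDegree_C] using hle
          _ < j + 2 := by omega
      rw [dickson_add_two]
      refine ⟨hmulm.sub_of_left ?_, ?_, hd.le⟩
      · exact degree_lt_degree (by rw [hmul]; exact hq)
      · rw [natDegree_sub_eq_left_of_natDegree_lt (by rw [hmul]; exact hq), hmul]

private lemma dickson_monic_deg {R : Type*} [CommRing R] [Nontrivial R] (a : R) {k : ℕ}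
    (hk : 1 ≤ k) : (Polynomial.dickson 1 a k).Monic ∧ (Polynomial.dickson 1 a k).natDegree = k := by
  obtain ⟨j, rfl⟩ := Nat.exists_eq_add_of_le hk
  have := dickson_deg_aux 1 a j
  rw [add_comm 1 j]
  exact ⟨this.1, this.2.1⟩

theorem pow_two_pow_add_one_factorization_case_a
    {q A m : ℕ} (F : Type*) [Field F] [Fintype F] [DecidableEq F]
    (hcard : Fintype.card F = q) (hq3 : q % 4 = 3)
    (hm : Odd m) (hA : 2 ≤ A) (hq : q = 2 ^ A * m - 1)
    (n : ℕ) (hn : 2 ≤ n) (hnA : n < A) :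
    ∀ Γ : Finset F, Γ = (Polynomial.dickson 1 (1 : F) (2 ^ (n - 1))).roots.toFinset →
      ((X ^ (2 ^ n) + 1 : F[X]) = ∏ γ ∈ Γ, (X ^ 2 + C γ * X + 1)) ∧
      (∀ γ ∈ Γ, Irreducible (X ^ 2 + C γ * X + 1 : F[X])) ∧
      Γ.card = 2 ^ (n - 1) := by
  classical
  intro Γ hΓ
  set K := AlgebraicClosure F
  set e : F →+* K := algebraMap F K with he_def
  have he : Function.Injective e := e.injective
  -- characteristic facts
  set p := ringChar F with hp_def
  haveI : CharP F p := ringChar.charP F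
  obtain ⟨f, hp, hqp⟩ := FiniteField.card F p
  rw [hcard] at hqp
  haveI : Fact p.Prime := ⟨hp⟩
  haveI : CharP K p := charP_of_injective_algebraMap he p
  have hqodd : q % 2 = 1 := by omega
  have hp2 : p ≠ 2 := by
    intro h
    have hdvd2 : p ∣ q := hqp ▸ dvd_pow_self p (by positivity : (0:ℕ) < (f:ℕ)).ne'
    rw [h] at hdvd2
    omega
  have h2F : (2 : F) ≠ 0 := by
    intro h
    have hdd := (CharP.cast_eq_zero_iff F p 2).mp (by exact_mod_cast h)
    have := Nat.le_of_dvd (by norm_num) hdd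
    have := hp.two_le
    omega
  have h2K : (2 : K) ≠ 0 := by
    intro h
    apply h2F
    apply he
    rw [map_ofNat, map_zero]
    exact_mod_cast h
  have hm1 : (-1 : K) ≠ 1 := by
    intro h
    apply h2K
    linear_combination -h
  have hm0 : (-1 : K) ≠ 0 := by simp
  -- numerics
  set N := 2 ^ n with hN_def
  set k := 2 ^ (n - 1) with hk_def
  have hk1 : 1 ≤ k := Nat.one_le_two_pow
  have hNk : N = 2 * k := by
    have h1 : n - 1 + 1 = n := by omega
    calc N = 2 ^ (n - 1 + 1) := by rw [hN_def, h1]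
      _ = 2 * k := by rw [pow_succ, hk_def]; ring
  have hN0 : N ≠ 0 := by positivity
  have hq1 : q + 1 = 2 ^ A * m := by
    have hm0' : 1 ≤ m := hm.pos
    have : 1 ≤ 2 ^ A * m := Nat.one_le_iff_ne_zero.mpr (by positivity)
    rw [hq, Nat.sub_add_cancel this]
  have hdvd : 2 ^ (n + 1) ∣ q + 1 := by
    rw [hq1]
    exact Dvd.dvd.mul_right (pow_dvd_pow 2 (by omega)) m
  -- the polynomial P over K and its roots
  set P : K[X] := X ^ N + 1 with hP_def
  have hPm : P.Monic := by
    have := monic_X_pow_add_C (a := (1:K)) hN0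
    simpa [hP_def] using this
  have hPdeg : P.natDegree = N := by
    have := natDegree_X_pow_add_C (n := N) (r := (1:K))
    simpa [hP_def] using this
  have hPsep : P.Separable := by
    have h2n : ((N : ℕ) : K) ≠ 0 := by
      rw [hN_def]
      push_cast
      exact pow_ne_zero n h2K
    have := separable_X_pow_sub_C (F := K) (-1) h2n hm0
    simpa [hP_def, sub_neg_eq_add, map_neg, C_1] using this
  have hsplit : P.Splits := IsAlgClosed.splits P
  have hrc : P.roots.card = N := by
    rw [← hPdeg]
    exact (splits_iff_card_roots.mp hsplit)
  have hnodup : P.roots.Nodup := nodup_roots hPsep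
  set U : Finset K := P.roots.toFinset with hU_def
  have hUval : U.val = P.roots := Multiset.dedup_eq_self.mpr hnodup
  have hUcard : U.card = N := by
    rw [Finset.card, hUval, hrc]
  have hmemU : ∀ u : K, u ∈ U ↔ u ^ N = -1 := by
    intro u
    rw [hU_def, Multiset.mem_toFinset, mem_roots hPm.ne_zero, IsRoot, hP_def]
    simp [eval_add, eval_pow, eval_X, eval_one]
    constructor
    · intro h; linear_combination h
    · intro h; linear_combination h
  have hu0 : ∀ u ∈ U, u ≠ 0 := by
    intro u hu h
    rw [hmemU] at hu
    rw [h, zero_pow hN0] at hu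
    exact hm0 hu.symm
  have huinv : ∀ u ∈ U, u⁻¹ ∈ U := by
    intro u hu
    rw [hmemU] at hu ⊢
    rw [inv_pow, hu]
    norm_num
  have huneg : ∀ u ∈ U, -u ∈ U := by
    intro u hu
    rw [hmemU] at hu ⊢
    rw [Even.neg_pow ⟨k, by omega⟩, hu]
  have husq : ∀ u ∈ U, u ^ 2 ≠ 1 := by
    intro u hu h
    rw [hmemU] at hu
    rw [hNk, pow_mul, h, one_pow] at hu
    exact hm1 hu.symm
  have hune : ∀ u ∈ U, u ≠ u⁻¹ := by
    intro u hu h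
    apply husq u hu
    rw [pow_two]
    nth_rewrite 2 [h]
    exact mul_inv_cancel₀ (hu0 u hu)
  have huq1 : ∀ u ∈ U, u ^ (q + 1) = 1 := by
    intro u hu
    rw [hmemU] at hu
    obtain ⟨t, ht⟩ := hdvd
    rw [ht, pow_mul, pow_succ, pow_mul, hu]
    simp
  have huq : ∀ u ∈ U, u ^ q = u⁻¹ := by
    intro u hu
    have h := huq1 u hu
    rw [pow_succ] at h
    exact eq_inv_of_mul_eq_one_left h
  -- the map φ and its fibers
  set φ : K → K := fun u => u + u⁻¹ with hφ_def
  have hφinv : ∀ u : K, φ u⁻¹ = φ u := by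
    intro u
    simp [hφ_def, inv_inv, add_comm]
    exact (congrArg (u⁻¹ + ·) (inv_inv u)).trans (add_comm _ _)
  have hfib : ∀ u ∈ U, ∀ v ∈ U, φ u = φ v → v = u ∨ v = u⁻¹ := by
    intro u hu v hv h
    have huu : u * u⁻¹ = 1 := mul_inv_cancel₀ (hu0 u hu)
    have hvv : v * v⁻¹ = 1 := mul_inv_cancel₀ (hu0 v hv)
    have hφ' : u + u⁻¹ = v + v⁻¹ := h
    have hz : (v - u) * (v - u⁻¹) = 0 := by
      linear_combination (-v) * hφ' + huu - hvv
    rcases mul_eq_zero.mp hz with h' | h'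
    · left; exact sub_eq_zero.mp h'
    · right; exact sub_eq_zero.mp h'
  set T : Finset K := U.image φ with hT_def
  have hmapsto : ∀ u ∈ U, φ u ∈ T := fun u hu => Finset.mem_image_of_mem φ hu
  -- fibers are pairs
  have hfiber : ∀ γ' ∈ T, ∃ u₀, u₀ ∈ U ∧ φ u₀ = γ' ∧ u₀ ≠ u₀⁻¹ ∧
      U.filter (fun u => φ u = γ') = {u₀, u₀⁻¹} := by
    intro γ' hγ'
    obtain ⟨u₀, hu₀, hφu₀⟩ := Finset.mem_image.mp hγ'
    refine ⟨u₀, hu₀, hφu₀, hune u₀ hu₀, ?_⟩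
    ext v
    simp only [Finset.mem_filter, Finset.mem_insert, Finset.mem_singleton]
    constructor
    · rintro ⟨hv, hφv⟩
      exact hfib u₀ hu₀ v hv (by rw [hφu₀, hφv])
    · rintro (rfl | rfl)
      · exact ⟨hu₀, hφu₀⟩
      · exact ⟨huinv u₀ hu₀, by rw [hφinv, hφu₀]⟩
  have hTcard : T.card = k := by
    have hsum := Finset.card_eq_sum_card_fiberwise hmapsto
    have : ∀ γ' ∈ T, (U.filter (fun u => φ u = γ')).card = 2 := by
      intro γ' hγ'
      obtain ⟨u₀, hu₀, hφu₀, hne, hfil⟩ := hfiber γ' hγ'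
      rw [hfil, Finset.card_pair hne]
    rw [Finset.sum_congr rfl this, Finset.sum_const, smul_eq_mul, hUcard, hNk] at hsum
    omega
  -- every element of T is fixed by Frobenius, hence comes from F
  have hTfix : ∀ γ' ∈ T, γ' ^ q = γ' := by
    intro γ' hγ'
    obtain ⟨u, hu, rfl⟩ := Finset.mem_image.mp hγ'
    rw [hφ_def]
    simp only
    rw [hqp, add_pow_char_pow, ← hqp, huq u hu, inv_pow, huq u hu, inv_inv, add_comm]
  have hrange : ∀ γ' : K, γ' ^ q = γ' → ∃ γ : F, e γ = γ' := by
    intro γ' hγ'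
    by_contra hcon
    push_neg at hcon
    have h1q : 1 < q := by omega
    set Q : K[X] := X ^ q - X with hQ_def
    have hQ0 : Q ≠ 0 := FiniteField.X_pow_card_sub_X_ne_zero K h1q
    have hQdeg : Q.natDegree = q := FiniteField.X_pow_card_sub_X_natDegree_eq K h1q
    have hsub : insert γ' (Finset.univ.image e) ⊆ Q.roots.toFinset := by
      intro x hx
      rw [Multiset.mem_toFinset, mem_roots hQ0, IsRoot, hQ_def]
      simp only [eval_sub, eval_pow, eval_X]
      rcases Finset.mem_insert.mp hx with rfl | hx
      · rw [hγ']; ring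
      · obtain ⟨a, _, rfl⟩ := Finset.mem_image.mp hx
        rw [← map_pow, ← hcard, FiniteField.pow_card]
        ring
    have hcard1 : (insert γ' (Finset.univ.image e)).card = q + 1 := by
      rw [Finset.card_insert_of_notMem (by
        intro hmem
        obtain ⟨a, _, ha⟩ := Finset.mem_image.mp hmem
        exact hcon a ha)]
      rw [Finset.card_image_of_injective _ he, Finset.card_univ, hcard]
    have hle : (insert γ' (Finset.univ.image e)).card ≤ Q.roots.toFinset.card :=
      Finset.card_le_card hsub
    have : Q.roots.toFinset.card ≤ q := by
      calc Q.roots.toFinset.card ≤ Multiset.card Q.roots := Multiset.toFinset_card_le _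
        _ ≤ Q.natDegree := Q.card_roots' 
        _ = q := hQdeg
    omega
  -- Dickson polynomials
  obtain ⟨hDkm, hDkdeg⟩ := dickson_monic_deg (1 : F) (k := k) hk1
  obtain ⟨hDkKm, hDkKdeg⟩ := dickson_monic_deg (1 : K) (k := k) hk1
  set Dk : F[X] := Polynomial.dickson 1 (1 : F) k with hDk_def
  set DkK : K[X] := Polynomial.dickson 1 (1 : K) k with hDkK_def
  have hmapD : Dk.map e = DkK := by
    rw [hDk_def, hDkK_def, map_dickson, map_one]
  -- T consists of roots of DkK
  have hTroots : T ⊆ DkK.roots.toFinset := by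
    intro γ' hγ'
    obtain ⟨u, hu, rfl⟩ := Finset.mem_image.mp hγ'
    rw [Multiset.mem_toFinset, mem_roots hDkKm.ne_zero]
    have heval := Polynomial.dickson_one_one_eval_add_inv u u⁻¹ (mul_inv_cancel₀ (hu0 u hu)) k
    have husqm : (u ^ k) ^ 2 = -1 := by
      rw [← pow_mul, mul_comm, ← hNk]
      exact (hmemU u).mp hu
    have hinv : (u ^ k)⁻¹ = -(u ^ k) := by
      apply inv_eq_of_mul_eq_one_right
      rw [mul_neg, ← pow_two, husqm]
      ring
    show DkK.eval (u + u⁻¹) = 0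
    rw [hDkK_def, heval, inv_pow, hinv]
    ring
  have hDKrootsle : DkK.roots.toFinset.card ≤ k := by
    calc DkK.roots.toFinset.card ≤ Multiset.card DkK.roots := Multiset.toFinset_card_le _
      _ ≤ DkK.natDegree := DkK.card_roots'
      _ = k := hDkKdeg
  have hTtop : T = DkK.roots.toFinset := by
    apply Finset.eq_of_subset_of_card_le hTroots
    rw [hTcard]
    exact hDKrootsle
  -- Γ's image in K is exactly T
  have hΓmem : ∀ γ : F, γ ∈ Γ ↔ Dk.eval γ = 0 := by
    intro γ
    rw [hΓ, Multiset.mem_toFinset, mem_roots hDkm.ne_zero]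
    rfl
  have hevalK : ∀ γ : F, DkK.eval (e γ) = e (Dk.eval γ) := by
    intro γ
    rw [← hmapD, eval_map, eval₂_at_apply]
  have hΓT : Γ.image e = T := by
    apply Finset.Subset.antisymm
    · intro γ' hγ'
      obtain ⟨γ, hγ, rfl⟩ := Finset.mem_image.mp hγ'
      rw [hTtop, Multiset.mem_toFinset, mem_roots hDkKm.ne_zero, IsRoot, hevalK,
        (hΓmem γ).mp hγ, map_zero]
    · intro γ' hγ'
      obtain ⟨γ, rfl⟩ := hrange γ' (hTfix γ' hγ')
      apply Finset.mem_image_of_mem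
      rw [hΓmem]
      apply he
      rw [← hevalK, map_zero]
      rw [hTtop, Multiset.mem_toFinset, mem_roots hDkKm.ne_zero] at hγ'
      exact hγ'
  have hΓcard : Γ.card = k := by
    rw [← hTcard, ← hΓT, Finset.card_image_of_injective _ he]
  -- the product identity
  have hprodT : ∏ γ' ∈ T, (X ^ 2 + C γ' * X + 1 : K[X]) = ∏ u ∈ U, (X + C u) := by
    rw [← Finset.prod_fiberwise_of_maps_to hmapsto (fun u => (X + C u : K[X]))]
    apply Finset.prod_congr rfl
    intro γ' hγ'
    obtain ⟨u₀, hu₀, hφu₀, hne, hfil⟩ := hfiber γ' hγ'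
    rw [hfil, Finset.prod_pair hne]
    have : (X + C u₀) * (X + C u₀⁻¹) = X ^ 2 + C (u₀ + u₀⁻¹) * X + C (u₀ * u₀⁻¹) := by
      rw [C_add, C_mul]
      ring
    rw [this, mul_inv_cancel₀ (hu0 u₀ hu₀), C_1, ← hφu₀]
  have hprodneg : ∏ u ∈ U, (X + C u : K[X]) = ∏ u ∈ U, (X - C u) := by
    apply Finset.prod_nbij' (fun u => -u) (fun u => -u)
    · intro u hu; exact huneg u hu
    · intro u hu; exact huneg u hu
    · intro u hu; exact neg_neg u
    · intro u hu; exact neg_neg u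
    · intro u hu; rw [map_neg, sub_neg_eq_add]
  have hprodP : ∏ u ∈ U, (X - C u : K[X]) = P := by
    rw [hsplit.eq_prod_roots_of_monic hPm, Finset.prod_eq_multiset_prod, hUval]
  have hgoal1 : (X ^ (2 ^ n) + 1 : F[X]) = ∏ γ ∈ Γ, (X ^ 2 + C γ * X + 1) := by
    apply map_injective e he
    rw [Polynomial.map_add, Polynomial.map_pow, map_X, Polynomial.map_one]
    calc (X : K[X]) ^ 2 ^ n + 1 = P := by rw [hP_def, hN_def]
      _ = ∏ u ∈ U, (X - C u) := hprodP.symm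
      _ = ∏ u ∈ U, (X + C u) := hprodneg.symm
      _ = ∏ γ' ∈ T, (X ^ 2 + C γ' * X + 1 : K[X]) := hprodT.symm
      _ = ∏ γ' ∈ Γ.image e, (X ^ 2 + C γ' * X + 1 : K[X]) := by rw [hΓT]
      _ = ∏ γ ∈ Γ, (X ^ 2 + C (e γ) * X + 1 : K[X]) :=
          Finset.prod_image (fun x _ y _ h => he h)
      _ = (∏ γ ∈ Γ, (X ^ 2 + C γ * X + 1 : F[X])).map e := by
          rw [Polynomial.map_prod]
          exact (Finset.prod_congr rfl fun γ _ => by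
            rw [Polynomial.map_add, Polynomial.map_add, Polynomial.map_mul, Polynomial.map_pow,
              map_X, map_C, Polynomial.map_one]).symm
  refine ⟨hgoal1, ?_, hΓcard⟩
  -- irreducibility
  intro γ hγ
  have hdeg2 : (X ^ 2 + C γ * X + 1 : F[X]).natDegree = 2 := by
    have := natDegree_quadratic (a := (1:F)) (b := γ) (c := 1) one_ne_zero
    simpa using this
  rw [irreducible_iff_roots_eq_zero_of_degree_le_three (by omega) (by omega)]
  rw [Multiset.eq_zero_iff_forall_notMem]
  intro x hx
  have hf0 : (X ^ 2 + C γ * X + 1 : F[X]) ≠ 0 := fun h => by simp [h] at hdeg2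
  rw [mem_roots hf0, IsRoot] at hx
  simp only [eval_add, eval_pow, eval_mul, eval_X, eval_C, eval_one] at hx
  -- transfer to K
  have hγT : e γ ∈ T := by
    rw [← hΓT]
    exact Finset.mem_image_of_mem e hγ
  obtain ⟨u, hu, hφu⟩ := Finset.mem_image.mp hγT
  have huu : u * u⁻¹ = 1 := mul_inv_cancel₀ (hu0 u hu)
  have hxK : (e x) ^ 2 + (u + u⁻¹) * (e x) + 1 = 0 := by
    have := congrArg e hx
    rw [map_add, map_add, map_mul, map_pow, map_one, map_zero] at this
    rw [← hφu] at this
    exact this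
  have hz : (e x + u) * (e x + u⁻¹) = 0 := by
    linear_combination hxK + huu
  have hux : ∃ y : F, e y = u := by
    rcases mul_eq_zero.mp hz with h' | h'
    · exact ⟨-x, by rw [map_neg]; linear_combination -h'⟩
    · refine ⟨(-x)⁻¹, ?_⟩
      rw [map_inv₀, map_neg]
      have h'' : u⁻¹ = -(e x) := by linear_combination h'
      rw [← h'', inv_inv]
  obtain ⟨y, rfl⟩ := hux
  have : (e y) ^ q = e y := by
    have hy : y ^ q = y := by rw [← hcard]; exact FiniteField.pow_card y
    rw [← map_pow, hy]
  apply husq (e y) hu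
  have h1 := huq1 (e y) hu
  rw [pow_succ, this] at h1
  rw [pow_two]
  exact h1
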